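/- arXiv:1909.06204 — 2 statements merged into one kernel-verified Lean document; each statement's English description precedes it below -/
import Mathlib

section
/- Let φ : ℝ³ → ℝ be a C² function such that there is a constant C > 0 with |φ(x)| ≤ C(1+‖x‖)^{-1} and ‖∇φ(x)‖ ≤ C(1+‖x‖)^{-2} for all x ∈ ℝ³. Suppose that (1/4)‖∇φ(x)‖² + (1/3)φ(x)·Δφ(x) = 0 for every x ∈ ℝ³, where Δ is the Euclidean Laplacian on ℝ³ and ∇φ the Euclidean gradient. Then φ is identically zero. -/
open Filter Set Topology

section Helpers

/-- One-dimensional second derivative test: at a local max the second derivative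
is nonpositive. -/
lemma second_deriv_test' {g g' : ℝ → ℝ} (hg : ∀ t, HasDerivAt g (g' t) t) {a : ℝ}
    (h2 : HasDerivAt g' a 0) (hmax : IsLocalMax g 0) : a ≤ 0 := by
  by_contra h
  push_neg at h
  have hg'0 : g' 0 = 0 := by
    have := hmax.deriv_eq_zero
    rwa [(hg 0).deriv] at this
  have hslope : Tendsto (fun t => g' t / t) (𝓝[≠] (0:ℝ)) (𝓝 a) := by
    have := hasDerivAt_iff_tendsto_slope.1 h2
    have heq : (fun t => g' t / t) = slope g' 0 := by
      funext t; rw [slope_def_field]; simp [hg'0]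
    rw [heq]; exact this
  have hpos : ∀ᶠ t in 𝓝[>] (0:ℝ), 0 < g' t := by
    have h1 : ∀ᶠ t in 𝓝[>] (0:ℝ), 0 < g' t / t :=
      (hslope.mono_left (nhdsWithin_mono _ fun t ht => ht.ne')).eventually
        (eventually_gt_nhds h)
    filter_upwards [h1, self_mem_nhdsWithin] with t ht ht'
    have := mul_pos ht (show (0:ℝ) < t from ht')
    rwa [div_mul_cancel₀] at this
    exact ne_of_gt ht'
  obtain ⟨u, hu, huo⟩ := mem_nhdsGT_iff_exists_Ioo_subset.1 hpos
  have hu0 : (0:ℝ) < u := hu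
  have hmono : StrictMonoOn g (Icc 0 u) := by
    apply strictMonoOn_of_deriv_pos (convex_Icc 0 u)
    · exact (continuous_iff_continuousAt.2 fun t => (hg t).continuousAt).continuousOn
    · intro t ht
      rw [interior_Icc] at ht
      rw [(hg t).deriv]
      exact huo ht
  have hev : ∀ᶠ t in 𝓝[>] (0:ℝ), g t ≤ g 0 :=
    (hmax.filter_mono nhdsWithin_le_nhds)
  have hlt : ∀ᶠ t in 𝓝[>] (0:ℝ), t < u := eventually_nhdsWithin_of_eventually_nhds
    (eventually_lt_nhds hu0)
  obtain ⟨t, ht1, ht2⟩ := (hev.and (hlt.and self_mem_nhdsWithin)).exists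
  have : g 0 < g t := hmono ⟨le_refl 0, hu0.le⟩ ⟨ht2.2.le, ht2.1.le⟩ ht2.2
  exact absurd ht1 (not_le.2 this)

end Helpers

/-- The Euclidean Laplacian of a function on `ℝ³`, as the sum of the second
partial derivatives in the coordinate directions. -/
noncomputable def euclideanLaplacian (φ : EuclideanSpace ℝ (Fin 3) → ℝ)
    (x : EuclideanSpace ℝ (Fin 3)) : ℝ :=
  ∑ i : Fin 3,
    fderiv ℝ (fun y => fderiv ℝ φ y (EuclideanSpace.single i 1)) x (EuclideanSpace.single i 1)

namespace NoHairAux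

abbrev E3 := EuclideanSpace ℝ (Fin 3)

lemma no_interior_max {v : E3 → ℝ} (hv : ContDiff ℝ 2 v) {x0 : E3}
    (hΔ : 0 < euclideanLaplacian v x0) : ¬ IsLocalMax v x0 := by
  intro hmax
  obtain ⟨i, -, hi⟩ : ∃ i ∈ Finset.univ, 0 < fderiv ℝ
      (fun y => fderiv ℝ v y (EuclideanSpace.single i 1)) x0 (EuclideanSpace.single i 1) := by
    by_contra hcon
    push_neg at hcon
    exact absurd (Finset.sum_nonpos fun i hi => (hcon i hi)) (not_le.2 hΔ)
  set e : E3 := EuclideanSpace.single i 1 with he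
  have hline : ∀ t : ℝ, HasDerivAt (fun s : ℝ => x0 + s • e) e t := by
    intro t
    simpa using ((hasDerivAt_id t).smul_const e).const_add x0
  have hdiff : Differentiable ℝ v := hv.differentiable (by norm_num)
  set g : ℝ → ℝ := fun t => v (x0 + t • e) with hgdef
  set g' : ℝ → ℝ := fun t => fderiv ℝ v (x0 + t • e) e with hg'def
  have hg : ∀ t, HasDerivAt g (g' t) t := fun t =>
    ((hdiff _).hasFDerivAt.comp_hasDerivAt t (hline t))
  have hD : ContDiff ℝ 1 (fun y => fderiv ℝ v y e) :=
    (hv.fderiv_right (le_refl _)).clm_apply contDiff_const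
  have h2 : HasDerivAt g' (fderiv ℝ (fun y => fderiv ℝ v y e) x0 e) 0 := by
    have := ((hD.differentiable one_ne_zero) (x0 + (0:ℝ) • e)).hasFDerivAt.comp_hasDerivAt 0 (hline 0)
    simp only [zero_smul, add_zero] at this; exact this
  have hgmax : IsLocalMax g 0 := by
    have hcont : ContinuousAt (fun t : ℝ => x0 + t • e) 0 := (hline 0).continuousAt
    have h0 : (fun t : ℝ => x0 + t • e) 0 = x0 := by simp
    have htd : Filter.Tendsto (fun t : ℝ => x0 + t • e) (𝓝 0) (𝓝 x0) := by
      have := hcont.tendsto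
      simpa using this
    have hev := htd.eventually hmax
    refine hev.mono fun t ht => ?_
    simpa [hgdef, h0] using ht
  have := second_deriv_test' hg h2 hgmax
  exact absurd this (not_le.2 hi)

noncomputable def Lq (y : E3) : E3 →L[ℝ] ℝ :=
  ∑ j, (2 * y j) • (EuclideanSpace.proj j : E3 →L[ℝ] ℝ)

lemma hasFDerivAt_q (y : E3) : HasFDerivAt (fun z : E3 => ∑ j, z j ^ 2) (Lq y) y := by
  have : ∀ j ∈ Finset.univ, HasFDerivAt (fun z : E3 => z j ^ 2)
      ((2 * y j) • (EuclideanSpace.proj j : E3 →L[ℝ] ℝ)) y := by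
    intro j _
    have hp : HasFDerivAt (fun z : E3 => z j) (EuclideanSpace.proj j : E3 →L[ℝ] ℝ) y :=
      (EuclideanSpace.proj j : E3 →L[ℝ] ℝ).hasFDerivAt
    have := hp.mul hp
    have h2 : (fun z : E3 => z j ^ 2) = fun z : E3 => z j * z j := by
      funext z; ring
    rw [h2]
    rw [two_mul, add_smul]
    exact this
  have := HasFDerivAt.fun_sum this
  simpa [Lq] using this

lemma Lq_apply (y : E3) (i : Fin 3) : Lq y (EuclideanSpace.single i 1) = 2 * y i := by
  simp only [Lq, ContinuousLinearMap.sum_apply, ContinuousLinearMap.smul_apply,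
    PiLp.proj_apply, EuclideanSpace.single_apply, smul_eq_mul]
  simp [Finset.sum_ite_eq]

lemma laplacian_formula (f : E3 → ℝ) (hf : ContDiff ℝ 2 f) (c : ℝ) (x : E3) :
    euclideanLaplacian (fun y => f y ^ 2 + c * ∑ j, y j ^ 2) x
      = 2 * (∑ i : Fin 3, (fderiv ℝ f x (EuclideanSpace.single i 1)) ^ 2)
        + 2 * f x * euclideanLaplacian f x + 6 * c := by
  have hdf : Differentiable ℝ f := hf.differentiable (by norm_num)
  have hw' : ∀ y : E3, HasFDerivAt (fun z => f z ^ 2 + c * ∑ j, z j ^ 2)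
      ((2 * f y) • fderiv ℝ f y + c • Lq y) y := by
    intro y
    have hsq : HasFDerivAt (fun z => f z ^ 2) ((2 * f y) • fderiv ℝ f y) y := by
      have := (hdf y).hasFDerivAt.mul (hdf y).hasFDerivAt
      have h2 : (fun z : E3 => f z ^ 2) = fun z : E3 => f z * f z := by funext z; ring
      rw [h2]
      rw [two_mul, add_smul]
      exact this
    exact hsq.add ((hasFDerivAt_q y).const_mul c)
  have key1 : ∀ (y : E3) (i : Fin 3),
      fderiv ℝ (fun z => f z ^ 2 + c * ∑ j, z j ^ 2) y (EuclideanSpace.single i 1)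
        = 2 * f y * fderiv ℝ f y (EuclideanSpace.single i 1) + 2 * c * y i := by
    intro y i
    rw [(hw' y).fderiv]
    simp only [ContinuousLinearMap.add_apply, ContinuousLinearMap.smul_apply, smul_eq_mul,
      Lq_apply]
    ring
  have key2 : ∀ i : Fin 3,
      fderiv ℝ (fun y => fderiv ℝ (fun z => f z ^ 2 + c * ∑ j, z j ^ 2) y
        (EuclideanSpace.single i 1)) x (EuclideanSpace.single i 1)
      = 2 * (fderiv ℝ f x (EuclideanSpace.single i 1)) ^ 2
        + 2 * f x * fderiv ℝ (fun y => fderiv ℝ f y (EuclideanSpace.single i 1)) x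
            (EuclideanSpace.single i 1) + 2 * c := by
    intro i
    set D : E3 → ℝ := fun y => fderiv ℝ f y (EuclideanSpace.single i 1) with hD
    have hfun : (fun y => fderiv ℝ (fun z => f z ^ 2 + c * ∑ j, z j ^ 2) y
        (EuclideanSpace.single i 1)) = fun y => 2 * f y * D y + 2 * c * y i := by
      funext y; exact key1 y i
    rw [hfun]
    have hDdiff : ContDiff ℝ 1 D := (hf.fderiv_right (le_refl _)).clm_apply contDiff_const
    have hBD : HasFDerivAt D (fderiv ℝ D x) x :=
      ((hDdiff.differentiable one_ne_zero) x).hasFDerivAt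
    have hA : HasFDerivAt (fun y => 2 * f y) ((2:ℝ) • fderiv ℝ f x) x :=
      (hdf x).hasFDerivAt.const_mul 2
    have hAB : HasFDerivAt (fun y => 2 * f y * D y)
        ((2 * f x) • fderiv ℝ D x + D x • ((2:ℝ) • fderiv ℝ f x)) x := hA.mul hBD
    have hCp : HasFDerivAt (fun y : E3 => 2 * c * y i)
        ((2 * c) • (EuclideanSpace.proj i : E3 →L[ℝ] ℝ)) x :=
      (EuclideanSpace.proj i : E3 →L[ℝ] ℝ).hasFDerivAt.const_mul (2 * c)
    have := (hAB.fun_add hCp).fderiv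
    rw [this]
    simp only [ContinuousLinearMap.add_apply, ContinuousLinearMap.smul_apply, smul_eq_mul,
      PiLp.proj_apply, EuclideanSpace.single_apply, eq_self_iff_true, if_true, hD]
    ring
  unfold euclideanLaplacian
  rw [Finset.sum_congr rfl fun i _ => key2 i]
  rw [Finset.sum_add_distrib, Finset.sum_add_distrib, ← Finset.mul_sum, ← Finset.mul_sum]
  simp [Finset.card_univ]
  ring

lemma grad_norm_sq (f : E3 → ℝ) (x : E3) :
    ‖gradient f x‖ ^ 2 = ∑ i : Fin 3, (fderiv ℝ f x (EuclideanSpace.single i 1)) ^ 2 := by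
  have h1 : ∀ i : Fin 3, fderiv ℝ f x (EuclideanSpace.single i 1) = gradient f x i := by
    intro i
    have : fderiv ℝ f x (EuclideanSpace.single i 1)
        = inner ℝ (gradient f x) (EuclideanSpace.single i 1 : E3) := by
      rw [gradient, InnerProductSpace.toDual_symm_apply]
    rw [this, real_inner_comm, EuclideanSpace.inner_single_left]
    simp
  simp only [h1]
  rw [EuclideanSpace.norm_eq]
  rw [Real.sq_sqrt (by positivity)]
  simp [sq_abs]

end NoHairAux

open NoHairAux in
/-- Concluding claim of Section 5 of the paper: a `C²` conformal scalar field
`φ` on flat `ℝ³` with the decay `φ = O(r⁻¹)`, `∇φ = O(r⁻²)`, whose energy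
density `-(1/4)|∇φ|² - (1/3) φ Δφ` vanishes identically, must vanish. -/
theorem scalar_flat_no_conformal_scalar_hair
    (φ : EuclideanSpace ℝ (Fin 3) → ℝ) (hφ : ContDiff ℝ 2 φ)
    (C : ℝ) (hC : 0 < C)
    (hdecay : ∀ x, |φ x| ≤ C * (1 + ‖x‖) ^ (-(1 : ℝ)))
    (hgrad : ∀ x, ‖gradient φ x‖ ≤ C * (1 + ‖x‖) ^ (-(2 : ℝ)))
    (heq : ∀ x, (1 / 4) * ‖gradient φ x‖ ^ 2 + (1 / 3) * φ x * euclideanLaplacian φ x = 0) :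
    ∀ x, φ x = 0 := by
  intro x
  -- it suffices to show `φ x ^ 2 ≤ 0`
  have hqsum : ∀ y : E3, ∑ j : Fin 3, y j ^ 2 = ‖y‖ ^ 2 := by
    intro y
    rw [EuclideanSpace.norm_eq, Real.sq_sqrt (by positivity)]
    simp [sq_abs]
  have hqC2 : ContDiff ℝ 2 (fun y : E3 => ∑ j : Fin 3, y j ^ 2) := by
    apply ContDiff.sum
    intro j _
    exact ((EuclideanSpace.proj j : E3 →L[ℝ] ℝ).contDiff).pow 2
  -- the key estimate, for every radius `R ≥ ‖x‖`
  have key : ∀ R : ℝ, ‖x‖ ≤ R → φ x ^ 2 ≤ C ^ 2 * ((1 + R)⁻¹) ^ 2 := by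
    intro R hR
    have hR0 : (0:ℝ) ≤ R := le_trans (norm_nonneg x) hR
    -- for every ε > 0 we get a bound with an `ε R²` error
    have step : ∀ ε : ℝ, 0 < ε → φ x ^ 2 ≤ C ^ 2 * ((1 + R)⁻¹) ^ 2 + ε * R ^ 2 := by
      intro ε hε
      set w : E3 → ℝ := fun y => φ y ^ 2 + ε * ∑ j : Fin 3, y j ^ 2 with hw
      have hwC2 : ContDiff ℝ 2 w := (hφ.pow 2).add (contDiff_const.mul hqC2)
      have hΔpos : ∀ y : E3, 0 < euclideanLaplacian w y := by
        intro y
        have hlf := laplacian_formula φ hφ ε y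
        have hgn := grad_norm_sq φ y
        have hy := heq y
        have hnn : 0 ≤ ‖gradient φ y‖ ^ 2 := sq_nonneg _
        rw [hw, hlf, ← hgn]
        nlinarith [hy, hnn, hε]
      -- maximum over the closed ball of radius R
      have hxK : x ∈ Metric.closedBall (0:E3) R := by
        simpa [Metric.mem_closedBall, dist_zero_right] using hR
      obtain ⟨x0, hx0K, hx0max⟩ :=
        (isCompact_closedBall (0:E3) R).exists_isMaxOn ⟨x, hxK⟩
          (hwC2.continuous.continuousOn)
      have hx0R : ‖x0‖ = R := by
        by_contra hne
        have hlt : ‖x0‖ < R := lt_of_le_of_ne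
          (by simpa [Metric.mem_closedBall, dist_zero_right] using hx0K) hne
        have hmem : Metric.closedBall (0:E3) R ∈ 𝓝 x0 :=
          Metric.closedBall_mem_nhds_of_mem (by simpa [dist_zero_right] using hlt)
        exact no_interior_max hwC2 (hΔpos x0) (hx0max.isLocalMax hmem)
      have hle : w x ≤ w x0 := hx0max hxK
      have hw0 : w x0 = φ x0 ^ 2 + ε * R ^ 2 := by
        rw [hw]
        simp only
        rw [hqsum x0, hx0R]
      have hφx0 : φ x0 ^ 2 ≤ C ^ 2 * ((1 + R)⁻¹) ^ 2 := by
        have hd := hdecay x0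
        have hb : (0:ℝ) ≤ C * (1 + ‖x0‖) ^ (-(1:ℝ)) :=
          le_trans (abs_nonneg _) hd
        have h1 : φ x0 ^ 2 = |φ x0| ^ 2 := (sq_abs _).symm
        have h2 : |φ x0| ^ 2 ≤ (C * (1 + ‖x0‖) ^ (-(1:ℝ))) ^ 2 :=
          pow_le_pow_left₀ (abs_nonneg _) hd 2
        rw [h1]
        refine le_trans h2 (le_of_eq ?_)
        rw [hx0R, Real.rpow_neg_one]
        ring
      have hwx : φ x ^ 2 ≤ w x := by
        rw [hw]
        simp only
        have : 0 ≤ ε * ∑ j : Fin 3, x j ^ 2 := by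
          apply mul_nonneg hε.le
          positivity
        linarith
      calc φ x ^ 2 ≤ w x := hwx
        _ ≤ w x0 := hle
        _ = φ x0 ^ 2 + ε * R ^ 2 := hw0
        _ ≤ C ^ 2 * ((1 + R)⁻¹) ^ 2 + ε * R ^ 2 := by linarith
    -- let ε → 0
    refine le_of_forall_pos_le_add fun ε' hε' => ?_
    have hε : 0 < ε' / (R ^ 2 + 1) := by positivity
    have := step _ hε
    have hfrac : ε' / (R ^ 2 + 1) * R ^ 2 ≤ ε' := by
      rw [div_mul_eq_mul_div, div_le_iff₀ (by positivity)]
      nlinarith [hε'.le, sq_nonneg R]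
    linarith
  -- let R → ∞
  have htend : Filter.Tendsto (fun R : ℝ => C ^ 2 * ((1 + R)⁻¹) ^ 2) atTop (𝓝 0) := by
    have h1 : Filter.Tendsto (fun R : ℝ => (1 + R)⁻¹) atTop (𝓝 0) :=
      tendsto_inv_atTop_zero.comp (tendsto_atTop_add_const_left atTop 1 tendsto_id)
    have h2 := (h1.pow 2).const_mul (C ^ 2)
    simpa using h2
  have hev : ∀ᶠ R in atTop, φ x ^ 2 ≤ C ^ 2 * ((1 + R)⁻¹) ^ 2 := by
    filter_upwards [eventually_ge_atTop ‖x‖] with R hR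
    exact key R hR
  have hle0 : φ x ^ 2 ≤ 0 := ge_of_tendsto htend hev
  have := sq_nonneg (φ x)
  have : φ x ^ 2 = 0 := le_antisymm hle0 this
  exact pow_eq_zero_iff (by norm_num) |>.1 this
end

section
/- Let τ > 1/2 and C > 0. Let g : {x ∈ ℝ³ : ‖x‖ ≥ 1} → Matrix (Fin 3) (Fin 3) ℝ be a C¹ map taking values in symmetric matrices with ‖g(x) - I‖ ≤ C‖x‖^{-τ} and ‖∂_k g(x)‖ ≤ C‖x‖^{-τ-1} for all k and all ‖x‖ ≥ 1, and let f : {‖x‖ ≥ 1} → ℝ be C¹ with |f(x)| ≤ C‖x‖^{-τ} and ‖∇f(x)‖ ≤ C‖x‖^{-τ-1}. Set ḡ = e^{f} g and g' = e^{2f} g. Then lim_{r→∞} ∫_{S_r} Σ_{i,j} [ (∂_i g'_{ij} - ∂_j g'_{ii}) + (∂_i g_{ij} - ∂_j g_{ii}) - 2(∂_i ḡ_{ij} - ∂_j ḡ_{ii}) ] (x_j/r) dS(x) = 0, where S_r ⊂ ℝ³ is the coordinate sphere of radius r and dS its surface measure. -/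
open MeasureTheory Filter
open scoped Matrix.Norms.L2Operator

/-- The exterior region `{x ∈ ℝ³ : ‖x‖ ≥ 1}`. -/
def exteriorRegion : Set (EuclideanSpace ℝ (Fin 3)) := {x | 1 ≤ ‖x‖}

/-- The partial derivative `∂_k h_{ij}(x)` of the `(i,j)` coordinate component
of a matrix-valued map `h` on the exterior region, in the `k`-th coordinate
direction. -/
noncomputable def matrixPartialDeriv
    (h : EuclideanSpace ℝ (Fin 3) → Matrix (Fin 3) (Fin 3) ℝ)
    (x : EuclideanSpace ℝ (Fin 3)) (k i j : Fin 3) : ℝ :=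
  fderivWithin ℝ (fun y => h y i j) exteriorRegion x (EuclideanSpace.single k 1)

/-- The ADM mass-density combination `∑_{i,j} (∂_i h_{ij} - ∂_j h_{ii}) x_j / r`
appearing in the flux integral defining the ADM mass. -/
noncomputable def admIntegrand
    (h : EuclideanSpace ℝ (Fin 3) → Matrix (Fin 3) (Fin 3) ℝ)
    (r : ℝ) (x : EuclideanSpace ℝ (Fin 3)) : ℝ :=
  ∑ i : Fin 3, ∑ j : Fin 3,
    (matrixPartialDeriv h x i i j - matrixPartialDeriv h x j i i) * (x j / r)

section Aux


open Real
open scoped ENNReal NNReal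


lemma euclid_abs_apply_le {ι : Type*} [Fintype ι] (v : EuclideanSpace ℝ ι) (i : ι) : |v i| ≤ ‖v‖ := by
  rw [EuclideanSpace.norm_eq, ← Real.sqrt_sq_eq_abs]
  apply Real.sqrt_le_sqrt
  have := Finset.single_le_sum (f := fun j => ‖v j‖ ^ 2) (fun j _ => by positivity) (Finset.mem_univ i)
  simpa [sq_abs] using this

lemma entry_abs_le {m n : Type*} [Fintype m] [Fintype n] [DecidableEq n]
    (A : Matrix m n ℝ) (i : m) (j : n) : |A i j| ≤ ‖A‖ := by
  have h := A.l2_opNorm_mulVec (EuclideanSpace.single j (1:ℝ))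
  rw [EuclideanSpace.norm_single, norm_one, mul_one] at h
  refine le_trans ?_ h
  refine le_trans (le_of_eq ?_) (euclid_abs_apply_le ((EuclideanSpace.equiv m ℝ).symm
    (A.mulVec (EuclideanSpace.single j (1:ℝ)))) i)
  show |A i j| = |(A.mulVec (EuclideanSpace.single j (1:ℝ))) i|
  have : A.mulVec (EuclideanSpace.single j (1:ℝ)) = A.mulVec (Pi.single j (1:ℝ)) := rfl
  rw [this, Matrix.mulVec_single]
  simp


noncomputable def sphMap (r : ℝ) : (Fin 2 → ℝ) → EuclideanSpace ℝ (Fin 3) :=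
  fun p => (EuclideanSpace.equiv (Fin 3) ℝ).symm
    ![r * (Real.sin (p 0) * Real.cos (p 1)), r * (Real.sin (p 0) * Real.sin (p 1)),
      r * Real.cos (p 0)]

lemma sphMap_apply (r : ℝ) (p : Fin 2 → ℝ) (i : Fin 3) :
    sphMap r p i = ![r * (Real.sin (p 0) * Real.cos (p 1)),
      r * (Real.sin (p 0) * Real.sin (p 1)), r * Real.cos (p 0)] i := rfl

lemma abs_sin_sub_sin (a b : ℝ) : |Real.sin a - Real.sin b| ≤ |a - b| := by
  have h1 := Real.abs_sin_le_abs (x := (a - b) / 2)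
  have h2 := Real.abs_cos_le_one ((a + b) / 2)
  have h3 : |(a - b) / 2| = |a - b| / 2 := by rw [abs_div]; norm_num
  rw [h3] at h1
  calc |Real.sin a - Real.sin b|
      = 2 * |Real.sin ((a - b) / 2)| * |Real.cos ((a + b) / 2)| := by
        rw [Real.sin_sub_sin, abs_mul, abs_mul, abs_two]
    _ ≤ 2 * (|a - b| / 2) * 1 := by gcongr
    _ = |a - b| := by ring

lemma abs_cos_sub_cos (a b : ℝ) : |Real.cos a - Real.cos b| ≤ |a - b| := by
  have h1 := Real.abs_sin_le_abs (x := (a - b) / 2)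
  have h2 := Real.abs_sin_le_one ((a + b) / 2)
  have h3 : |(a - b) / 2| = |a - b| / 2 := by rw [abs_div]; norm_num
  rw [h3] at h1
  calc |Real.cos a - Real.cos b|
      = 2 * |Real.sin ((a + b) / 2)| * |Real.sin ((a - b) / 2)| := by
        rw [Real.cos_sub_cos, abs_mul, abs_mul]
        norm_num
    _ ≤ 2 * 1 * (|a - b| / 2) := by gcongr
    _ = |a - b| := by ring

lemma sphMap_lipschitz (r : ℝ) (hr : 0 ≤ r) :
    LipschitzWith ((4 * r).toNNReal) (sphMap r) := by
  rw [lipschitzWith_iff_dist_le_mul]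
  intro p q
  have hd0 : (0:ℝ) ≤ dist p q := dist_nonneg
  have h0 : |p 0 - q 0| ≤ dist p q := by
    simpa [Real.dist_eq] using dist_le_pi_dist p q 0
  have h1 : |p 1 - q 1| ≤ dist p q := by
    simpa [Real.dist_eq] using dist_le_pi_dist p q 1
  have hs0 := abs_sin_sub_sin (p 0) (q 0)
  have hc0 := abs_cos_sub_cos (p 0) (q 0)
  have hs1 := abs_sin_sub_sin (p 1) (q 1)
  have hc1 := abs_cos_sub_cos (p 1) (q 1)
  have e1 : |Real.sin (p 0) * Real.cos (p 1) - Real.sin (q 0) * Real.cos (q 1)| ≤ 2 * dist p q := by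
    have e : Real.sin (p 0) * Real.cos (p 1) - Real.sin (q 0) * Real.cos (q 1)
        = (Real.sin (p 0) - Real.sin (q 0)) * Real.cos (p 1)
          + Real.sin (q 0) * (Real.cos (p 1) - Real.cos (q 1)) := by ring
    rw [e]
    refine (abs_add_le _ _).trans ?_
    rw [abs_mul, abs_mul]
    nlinarith [Real.abs_cos_le_one (p 1), Real.abs_sin_le_one (q 0),
      abs_nonneg (Real.sin (p 0) - Real.sin (q 0)), abs_nonneg (Real.cos (p 1) - Real.cos (q 1)),
      abs_nonneg (Real.sin (q 0)), abs_nonneg (Real.cos (p 1))]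
  have e2 : |Real.sin (p 0) * Real.sin (p 1) - Real.sin (q 0) * Real.sin (q 1)| ≤ 2 * dist p q := by
    have e : Real.sin (p 0) * Real.sin (p 1) - Real.sin (q 0) * Real.sin (q 1)
        = (Real.sin (p 0) - Real.sin (q 0)) * Real.sin (p 1)
          + Real.sin (q 0) * (Real.sin (p 1) - Real.sin (q 1)) := by ring
    rw [e]
    refine (abs_add_le _ _).trans ?_
    rw [abs_mul, abs_mul]
    nlinarith [Real.abs_sin_le_one (p 1), Real.abs_sin_le_one (q 0),
      abs_nonneg (Real.sin (p 0) - Real.sin (q 0)), abs_nonneg (Real.sin (p 1) - Real.sin (q 1)),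
      abs_nonneg (Real.sin (q 0)), abs_nonneg (Real.sin (p 1))]
  have e3 : |Real.cos (p 0) - Real.cos (q 0)| ≤ 2 * dist p q := by
    refine hc0.trans (h0.trans ?_); linarith
  rw [Real.coe_toNNReal _ (by positivity)]
  rw [EuclideanSpace.dist_eq]
  have key : (∑ i : Fin 3, dist (sphMap r p i) (sphMap r q i) ^ 2) ≤ (4 * r * dist p q) ^ 2 := by
    rw [Fin.sum_univ_three]
    simp only [sphMap_apply, Matrix.cons_val_zero, Matrix.cons_val_one, Matrix.head_cons,
      Matrix.cons_val_two, Matrix.tail_cons, Real.dist_eq]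
    have a1 : |r * (Real.sin (p 0) * Real.cos (p 1)) - r * (Real.sin (q 0) * Real.cos (q 1))|
        ≤ r * (2 * dist p q) := by
      rw [← mul_sub, abs_mul, abs_of_nonneg hr]
      exact mul_le_mul_of_nonneg_left e1 hr
    have a2 : |r * (Real.sin (p 0) * Real.sin (p 1)) - r * (Real.sin (q 0) * Real.sin (q 1))|
        ≤ r * (2 * dist p q) := by
      rw [← mul_sub, abs_mul, abs_of_nonneg hr]
      exact mul_le_mul_of_nonneg_left e2 hr
    have a3 : |r * Real.cos (p 0) - r * Real.cos (q 0)| ≤ r * (2 * dist p q) := by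
      rw [← mul_sub, abs_mul, abs_of_nonneg hr]
      exact mul_le_mul_of_nonneg_left e3 hr
    nlinarith [abs_nonneg (r * (Real.sin (p 0) * Real.cos (p 1)) - r * (Real.sin (q 0) * Real.cos (q 1))),
      abs_nonneg (r * (Real.sin (p 0) * Real.sin (p 1)) - r * (Real.sin (q 0) * Real.sin (q 1))),
      abs_nonneg (r * Real.cos (p 0) - r * Real.cos (q 0)),
      sq_abs (r * (Real.sin (p 0) * Real.cos (p 1)) - r * (Real.sin (q 0) * Real.cos (q 1))),
      sq_abs (r * (Real.sin (p 0) * Real.sin (p 1)) - r * (Real.sin (q 0) * Real.sin (q 1))),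
      sq_abs (r * Real.cos (p 0) - r * Real.cos (q 0)), mul_nonneg hr hd0]
  calc √(∑ i : Fin 3, dist (sphMap r p i) (sphMap r q i) ^ 2)
      ≤ √((4 * r * dist p q) ^ 2) := Real.sqrt_le_sqrt key
    _ = 4 * r * dist p q := Real.sqrt_sq (by positivity)


lemma sphere_subset_image (r : ℝ) (hr : 0 < r) :
    Metric.sphere (0 : EuclideanSpace ℝ (Fin 3)) r ⊆
      sphMap r '' (Set.univ.pi ![Set.Icc 0 π, Set.Icc (-π) π]) := by
  intro x hx
  have hnorm : ‖x‖ = r := by simpa using hx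
  have hsum : x 0 ^ 2 + x 1 ^ 2 + x 2 ^ 2 = r ^ 2 := by
    rw [EuclideanSpace.norm_eq, Fin.sum_univ_three] at hnorm
    have h := congrArg (· ^ 2) hnorm
    simp only at h
    rw [Real.sq_sqrt (by positivity)] at h
    simpa [sq_abs] using h
  have hr' : r ≠ 0 := ne_of_gt hr
  set t : ℝ := x 2 / r with ht
  have ht1 : -1 ≤ t := by
    rw [ht, le_div_iff₀ hr]
    nlinarith [sq_nonneg (x 0), sq_nonneg (x 1)]
  have ht2 : t ≤ 1 := by
    rw [ht, div_le_iff₀ hr]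
    nlinarith [sq_nonneg (x 0), sq_nonneg (x 1)]
  set θ := Real.arccos t with hθ
  have hcosθ : Real.cos θ = t := Real.cos_arccos ht1 ht2
  set ρ := Real.sqrt (x 0 ^ 2 + x 1 ^ 2) with hρ
  have hsinθ : Real.sin θ = ρ / r := by
    rw [hθ, Real.sin_arccos]
    have h1 : 1 - t ^ 2 = (x 0 ^ 2 + x 1 ^ 2) / r ^ 2 := by
      rw [ht]; field_simp; nlinarith [hsum]
    rw [h1, Real.sqrt_div (by positivity) (r ^ 2), Real.sqrt_sq hr.le]
  have hmemθ : θ ∈ Set.Icc (0:ℝ) π := ⟨Real.arccos_nonneg t, Real.arccos_le_pi t⟩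
  have hx2 : r * Real.cos θ = x 2 := by rw [hcosθ, ht]; field_simp
  by_cases hρ0 : ρ = 0
  · have hle : x 0 ^ 2 + x 1 ^ 2 ≤ 0 := Real.sqrt_eq_zero'.mp hρ0
    have hx0 : x 0 = 0 := by nlinarith [sq_nonneg (x 0), sq_nonneg (x 1)]
    have hx1 : x 1 = 0 := by nlinarith [sq_nonneg (x 0), sq_nonneg (x 1)]
    refine ⟨![θ, 0], ?_, ?_⟩
    · intro i _
      fin_cases i
      · simpa using hmemθ
      · simp
        linarith [Real.pi_pos]
    · ext i
      fin_cases i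
      · show r * (Real.sin θ * Real.cos 0) = x 0
        rw [hsinθ, hρ0, hx0]; simp
      · show r * (Real.sin θ * Real.sin 0) = x 1
        rw [hx1]; simp
      · exact hx2
  · have hρpos : 0 < ρ := lt_of_le_of_ne (Real.sqrt_nonneg _) (Ne.symm hρ0)
    set z : ℂ := ⟨x 0, x 1⟩ with hz
    have hzne : z ≠ 0 := by
      intro h
      apply hρ0
      have h0 : x 0 = 0 := by
        have := congrArg Complex.re h; simpa [hz] using this
      have h1 : x 1 = 0 := by
        have := congrArg Complex.im h; simpa [hz] using this
      rw [hρ, h0, h1]; simp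
    have habs : ‖z‖ = ρ := by
      rw [Complex.norm_def, Complex.normSq_apply, hρ]
      simp only [hz]
      ring_nf
    set φ := Complex.arg z with hφ
    have hcosφ : Real.cos φ = x 0 / ρ := by
      rw [hφ, Complex.cos_arg hzne, habs]
    have hsinφ : Real.sin φ = x 1 / ρ := by
      rw [hφ, Complex.sin_arg, habs]
    have hmemφ : φ ∈ Set.Icc (-π) π := Set.Ioc_subset_Icc_self (Complex.arg_mem_Ioc z)
    refine ⟨![θ, φ], ?_, ?_⟩
    · intro i _
      fin_cases i
      · simpa using hmemθ
      · simpa using hmemφ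
    · ext i
      fin_cases i
      · show r * (Real.sin θ * Real.cos φ) = x 0
        rw [hsinθ, hcosφ]; field_simp
      · show r * (Real.sin θ * Real.sin φ) = x 1
        rw [hsinθ, hsinφ]; field_simp
      · exact hx2

lemma sphere_hm_le (r : ℝ) (hr : 0 < r) :
    μH[2] (Metric.sphere (0 : EuclideanSpace ℝ (Fin 3)) r)
      ≤ ENNReal.ofReal (32 * π ^ 2 * r ^ 2) := by
  have hlip := sphMap_lipschitz r hr.le
  set S : Set (Fin 2 → ℝ) := Set.univ.pi ![Set.Icc 0 π, Set.Icc (-π) π] with hS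
  have hpi : (μH[2] : Measure (Fin 2 → ℝ)) = volume := by
    have := MeasureTheory.hausdorffMeasure_pi_real (ι := Fin 2)
    rw [Fintype.card_fin] at this
    rw [← this]
    norm_num
  have hvol : volume S ≤ ENNReal.ofReal (2 * π ^ 2) := by
    rw [hS, volume_pi_pi, Fin.prod_univ_two]
    simp only [Matrix.cons_val_zero, Matrix.cons_val_one, Matrix.head_cons, Real.volume_Icc]
    rw [show π - 0 = π by ring, show π - -π = 2 * π by ring,
      ← ENNReal.ofReal_mul Real.pi_pos.le]
    apply ENNReal.ofReal_le_ofReal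
    nlinarith [Real.pi_pos]
  calc μH[2] (Metric.sphere (0 : EuclideanSpace ℝ (Fin 3)) r)
      ≤ μH[2] (sphMap r '' S) := measure_mono (sphere_subset_image r hr)
    _ ≤ ((4 * r).toNNReal : ℝ≥0∞) ^ (2:ℝ) * μH[2] S :=
        hlip.hausdorffMeasure_image_le (by norm_num) S
    _ ≤ ENNReal.ofReal ((4 * r) ^ 2) * ENNReal.ofReal (2 * π ^ 2) := by
        rw [hpi]
        apply mul_le_mul' (le_of_eq ?_) hvol
        rw [show (2:ℝ) = ((2:ℕ):ℝ) by norm_num, ENNReal.rpow_natCast,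
          ← ENNReal.coe_pow, ENNReal.ofReal, Real.toNNReal_pow (by positivity)]
    _ = ENNReal.ofReal (32 * π ^ 2 * r ^ 2) := by
        rw [← ENNReal.ofReal_mul (by positivity)]
        congr 1
        ring


noncomputable def entryCLM (i j : Fin 3) : Matrix (Fin 3) (Fin 3) ℝ →L[ℝ] ℝ :=
  LinearMap.toContinuousLinearMap
    ((LinearMap.proj j).comp (LinearMap.proj (R := ℝ) (φ := fun _ : Fin 3 => Fin 3 → ℝ) i))

lemma abs_exp_sub_one_le (t : ℝ) : |Real.exp t - 1| ≤ |t| * Real.exp |t| := by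
  rcases le_or_gt 0 t with h | h
  · rw [abs_of_nonneg h, abs_of_nonneg (by nlinarith [Real.add_one_le_exp t] : (0:ℝ) ≤ Real.exp t - 1)]
    have h1 := Real.add_one_le_exp (-t)
    have h2 : Real.exp (-t) * Real.exp t = 1 := by
      rw [← Real.exp_add]; simp
    nlinarith [Real.exp_pos t]
  · rw [abs_of_neg h, abs_of_nonpos (by nlinarith [Real.exp_lt_one_iff.mpr h] : Real.exp t - 1 ≤ 0)]
    have h1 := Real.add_one_le_exp t
    have h2 := Real.one_le_exp (le_of_lt (neg_pos.mpr h) : (0:ℝ) ≤ -t)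
    nlinarith

theorem comb_partial_bound
    (τ C : ℝ) (hτ : 1 / 2 < τ) (hC : 0 < C)
    (g : EuclideanSpace ℝ (Fin 3) → Matrix (Fin 3) (Fin 3) ℝ)
    (f : EuclideanSpace ℝ (Fin 3) → ℝ)
    (hg : ContDiffOn ℝ 1 g exteriorRegion)
    (hf : ContDiffOn ℝ 1 f exteriorRegion)
    (hgdecay : ∀ x ∈ exteriorRegion, ‖g x - 1‖ ≤ C * ‖x‖ ^ (-τ))
    (hdgdecay : ∀ x ∈ exteriorRegion, ∀ k : Fin 3,
      ‖fderivWithin ℝ g exteriorRegion x (EuclideanSpace.single k 1)‖ ≤ C * ‖x‖ ^ (-τ - 1))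
    (hfdecay : ∀ x ∈ exteriorRegion, |f x| ≤ C * ‖x‖ ^ (-τ))
    (hdfdecay : ∀ x ∈ exteriorRegion,
      ‖fderivWithin ℝ f exteriorRegion x‖ ≤ C * ‖x‖ ^ (-τ - 1))
    (x : EuclideanSpace ℝ (Fin 3)) (hx2 : 2 ≤ ‖x‖) (k i j : Fin 3) :
    |matrixPartialDeriv (fun y => Real.exp (2 * f y) • g y) x k i j
      + matrixPartialDeriv g x k i j
      - 2 * matrixPartialDeriv (fun y => Real.exp (f y) • g y) x k i j|
    ≤ (C ^ 3 * Real.exp C ^ 2 + 2 * (C + 1) * C ^ 2 * Real.exp C ^ 2)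
        * ‖x‖ ^ (-2 * τ - 1) := by
  have hτ0 : 0 < τ := by linarith
  have hx1 : (1:ℝ) ≤ ‖x‖ := by linarith
  have hxpos : (0:ℝ) < ‖x‖ := by linarith
  have hxs : x ∈ exteriorRegion := hx1
  have hnhds : exteriorRegion ∈ nhds x := by
    have hopen : IsOpen {y : EuclideanSpace ℝ (Fin 3) | 1 < ‖y‖} :=
      isOpen_lt continuous_const continuous_norm
    exact Filter.mem_of_superset (hopen.mem_nhds (by simpa using by linarith : 1 < ‖x‖))
      (fun y hy => by simpa [exteriorRegion] using le_of_lt hy)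
  have hud : UniqueDiffWithinAt ℝ exteriorRegion x := uniqueDiffWithinAt_of_mem_nhds hnhds
  -- derivatives
  have hfd : DifferentiableWithinAt ℝ f exteriorRegion x := hf.differentiableOn one_ne_zero x hxs
  have hgd : DifferentiableWithinAt ℝ g exteriorRegion x := hg.differentiableOn one_ne_zero x hxs
  set Df := fderivWithin ℝ f exteriorRegion x with hDfdef
  set Dg := fderivWithin ℝ g exteriorRegion x with hDgdef
  have hDf : HasFDerivWithinAt f Df exteriorRegion x := hfd.hasFDerivWithinAt
  have hDg : HasFDerivWithinAt g Dg exteriorRegion x := hgd.hasFDerivWithinAt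
  set Gd : EuclideanSpace ℝ (Fin 3) →L[ℝ] ℝ := (entryCLM i j).comp Dg with hGddef
  have hGij : HasFDerivWithinAt (fun y => g y i j) Gd exteriorRegion x :=
    (entryCLM i j).hasFDerivAt.comp_hasFDerivWithinAt x hDg
  have hexp1 : HasFDerivWithinAt (fun y => Real.exp (f y))
      (Real.exp (f x) • Df) exteriorRegion x :=
    (Real.hasDerivAt_exp (f x)).comp_hasFDerivWithinAt x hDf
  have h2f : HasFDerivWithinAt (fun y => 2 * f y) ((2:ℝ) • Df) exteriorRegion x :=
    hDf.const_mul 2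
  have hexp2 : HasFDerivWithinAt (fun y => Real.exp (2 * f y))
      (Real.exp (2 * f x) • ((2:ℝ) • Df)) exteriorRegion x :=
    by have := (Real.hasDerivAt_exp (2 * f x)).comp_hasFDerivWithinAt x h2f; exact this
  have hprod1 : HasFDerivWithinAt (fun y => Real.exp (f y) * g y i j)
      (Real.exp (f x) • Gd + (g x i j) • (Real.exp (f x) • Df)) exteriorRegion x :=
    hexp1.mul hGij
  have hprod2 : HasFDerivWithinAt (fun y => Real.exp (2 * f y) * g y i j)
      (Real.exp (2 * f x) • Gd + (g x i j) • (Real.exp (2 * f x) • ((2:ℝ) • Df)))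
      exteriorRegion x := hexp2.mul hGij
  -- identify the partial derivatives
  set v := EuclideanSpace.single (𝕜 := ℝ) k (1:ℝ) with hvdef
  have e0 : matrixPartialDeriv g x k i j = Gd v := by
    simp only [matrixPartialDeriv]
    rw [hGij.fderivWithin hud]
  have e1 : matrixPartialDeriv (fun y => Real.exp (f y) • g y) x k i j
      = (Real.exp (f x) • Gd + (g x i j) • (Real.exp (f x) • Df)) v := by
    simp only [matrixPartialDeriv]
    rw [show (fun y => (Real.exp (f y) • g y : Matrix (Fin 3) (Fin 3) ℝ) i j)
        = (fun y => Real.exp (f y) * g y i j) from rfl]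
    rw [hprod1.fderivWithin hud]
  have e2 : matrixPartialDeriv (fun y => Real.exp (2 * f y) • g y) x k i j
      = (Real.exp (2 * f x) • Gd + (g x i j) • (Real.exp (2 * f x) • ((2:ℝ) • Df))) v := by
    simp only [matrixPartialDeriv]
    rw [show (fun y => (Real.exp (2 * f y) • g y : Matrix (Fin 3) (Fin 3) ℝ) i j)
        = (fun y => Real.exp (2 * f y) * g y i j) from rfl]
    rw [hprod2.fderivWithin hud]
  rw [e0, e1, e2]
  simp only [ContinuousLinearMap.add_apply, ContinuousLinearMap.smul_apply, smul_eq_mul]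
  set a := Real.exp (f x) with hadef
  set u := Df v with hudef
  set w := Gd v with hwdef
  set G := g x i j with hGdef
  have ha2 : Real.exp (2 * f x) = a ^ 2 := by
    rw [two_mul, Real.exp_add]; ring
  rw [ha2]
  have hT : a ^ 2 * w + G * (a ^ 2 * (2 * u)) + w - 2 * (a * w + G * (a * u))
      = (a - 1) ^ 2 * w + 2 * G * a * u * (a - 1) := by ring
  rw [hT]
  -- bounds
  set E := Real.exp C with hEdef
  set R1 := ‖x‖ ^ (-τ) with hR1def
  set R2 := ‖x‖ ^ (-τ - 1) with hR2def
  set R3 := ‖x‖ ^ (-2 * τ - 1) with hR3def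
  have hR1pos : 0 < R1 := Real.rpow_pos_of_pos hxpos _
  have hR2pos : 0 < R2 := Real.rpow_pos_of_pos hxpos _
  have hR3pos : 0 < R3 := Real.rpow_pos_of_pos hxpos _
  have hR1le1 : R1 ≤ 1 := Real.rpow_le_one_of_one_le_of_nonpos hx1 (by linarith)
  have hR12 : R1 * R2 = R3 := by
    rw [hR1def, hR2def, hR3def, ← Real.rpow_add hxpos]
    ring_nf
  have hfb : |f x| ≤ C * R1 := hfdecay x hxs
  have hfC : |f x| ≤ C := by
    calc |f x| ≤ C * R1 := hfb
      _ ≤ C * 1 := by gcongr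
      _ = C := mul_one C
  have haE : a ≤ E := Real.exp_le_exp.mpr (le_trans (le_abs_self _) hfC)
  have ha0 : 0 < a := Real.exp_pos _
  have hE1 : 1 ≤ E := Real.one_le_exp hC.le
  have hA : |a - 1| ≤ E * (C * R1) := by
    calc |a - 1| ≤ |f x| * Real.exp |f x| := abs_exp_sub_one_le (f x)
      _ ≤ (C * R1) * E := by
          apply mul_le_mul hfb (Real.exp_le_exp.mpr hfC) (Real.exp_pos _).le (by positivity)
      _ = E * (C * R1) := by ring
  have hu : |u| ≤ C * R2 := by
    calc |u| ≤ ‖Df‖ * ‖v‖ := Df.le_opNorm v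
      _ = ‖Df‖ := by rw [hvdef, EuclideanSpace.norm_single, norm_one, mul_one]
      _ ≤ C * R2 := hdfdecay x hxs
  have hw : |w| ≤ C * R2 := by
    have h1 : |w| ≤ ‖Dg v‖ := by
      rw [hwdef, hGddef]
      exact entry_abs_le (Dg v) i j
    exact h1.trans (hdgdecay x hxs k)
  have hG : |G| ≤ C + 1 := by
    have h1 : G = (g x - 1) i j + (1 : Matrix (Fin 3) (Fin 3) ℝ) i j := by
      simp [hGdef, Matrix.sub_apply]
    have h2 : |(1 : Matrix (Fin 3) (Fin 3) ℝ) i j| ≤ 1 := by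
      rw [Matrix.one_apply]
      split <;> simp
    have h3 : |(g x - 1) i j| ≤ C * R1 := (entry_abs_le _ i j).trans (hgdecay x hxs)
    calc |G| ≤ |(g x - 1) i j| + |(1 : Matrix (Fin 3) (Fin 3) ℝ) i j| := by
          rw [h1]; exact abs_add_le _ _
      _ ≤ C * R1 + 1 := add_le_add h3 h2
      _ ≤ C * 1 + 1 := by gcongr
      _ = C + 1 := by ring
  -- final estimate
  calc |(a - 1) ^ 2 * w + 2 * G * a * u * (a - 1)|
      ≤ |(a - 1) ^ 2 * w| + |2 * G * a * u * (a - 1)| := abs_add_le _ _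
    _ = |a - 1| ^ 2 * |w| + 2 * |G| * a * |u| * |a - 1| := by
        rw [abs_mul, abs_mul, abs_mul, abs_mul, abs_mul, abs_pow]
        rw [abs_of_pos ha0]
        norm_num
    _ ≤ (E * (C * R1)) ^ 2 * (C * R2) + 2 * (C + 1) * E * (C * R2) * (E * (C * R1)) := by
        gcongr
    _ = (C ^ 3 * E ^ 2) * (R1 * (R1 * R2)) + (2 * (C + 1) * C ^ 2 * E ^ 2) * (R1 * R2) := by
        ring
    _ ≤ (C ^ 3 * E ^ 2) * (1 * R3) + (2 * (C + 1) * C ^ 2 * E ^ 2) * R3 := by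
        rw [hR12]
        gcongr
    _ = (C ^ 3 * E ^ 2 + 2 * (C + 1) * C ^ 2 * E ^ 2) * R3 := by ring

end Aux


theorem integrand_bound
    (τ C : ℝ) (hτ : 1 / 2 < τ) (hC : 0 < C)
    (g : EuclideanSpace ℝ (Fin 3) → Matrix (Fin 3) (Fin 3) ℝ)
    (f : EuclideanSpace ℝ (Fin 3) → ℝ)
    (hg : ContDiffOn ℝ 1 g exteriorRegion)
    (hf : ContDiffOn ℝ 1 f exteriorRegion)
    (hgdecay : ∀ x ∈ exteriorRegion, ‖g x - 1‖ ≤ C * ‖x‖ ^ (-τ))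
    (hdgdecay : ∀ x ∈ exteriorRegion, ∀ k : Fin 3,
      ‖fderivWithin ℝ g exteriorRegion x (EuclideanSpace.single k 1)‖ ≤ C * ‖x‖ ^ (-τ - 1))
    (hfdecay : ∀ x ∈ exteriorRegion, |f x| ≤ C * ‖x‖ ^ (-τ))
    (hdfdecay : ∀ x ∈ exteriorRegion,
      ‖fderivWithin ℝ f exteriorRegion x‖ ≤ C * ‖x‖ ^ (-τ - 1))
    (r : ℝ) (hr : 2 ≤ r) (x : EuclideanSpace ℝ (Fin 3))
    (hx : x ∈ Metric.sphere (0 : EuclideanSpace ℝ (Fin 3)) r) :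
    |admIntegrand (fun y => Real.exp (2 * f y) • g y) r x
      + admIntegrand g r x
      - 2 * admIntegrand (fun y => Real.exp (f y) • g y) r x|
    ≤ 18 * (C ^ 3 * Real.exp C ^ 2 + 2 * (C + 1) * C ^ 2 * Real.exp C ^ 2)
        * r ^ (-2 * τ - 1) := by
  have hxnorm : ‖x‖ = r := by simpa using hx
  have hx2 : 2 ≤ ‖x‖ := by rw [hxnorm]; exact hr
  have hrpos : (0:ℝ) < r := by linarith
  set B := C ^ 3 * Real.exp C ^ 2 + 2 * (C + 1) * C ^ 2 * Real.exp C ^ 2 with hBdef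
  have hBpos : 0 < B := by positivity
  have hxj : ∀ j : Fin 3, |x j / r| ≤ 1 := by
    intro j
    rw [abs_div, abs_of_pos hrpos, div_le_one hrpos]
    calc |x j| ≤ ‖x‖ := euclid_abs_apply_le x j
      _ = r := hxnorm
  have hsplit : admIntegrand (fun y => Real.exp (2 * f y) • g y) r x
      + admIntegrand g r x
      - 2 * admIntegrand (fun y => Real.exp (f y) • g y) r x
      = ∑ i : Fin 3, ∑ j : Fin 3,
        ((matrixPartialDeriv (fun y => Real.exp (2 * f y) • g y) x i i j
            + matrixPartialDeriv g x i i j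
            - 2 * matrixPartialDeriv (fun y => Real.exp (f y) • g y) x i i j)
          - (matrixPartialDeriv (fun y => Real.exp (2 * f y) • g y) x j i i
            + matrixPartialDeriv g x j i i
            - 2 * matrixPartialDeriv (fun y => Real.exp (f y) • g y) x j i i))
          * (x j / r) := by
    simp only [admIntegrand, Finset.mul_sum, ← Finset.sum_add_distrib, ← Finset.sum_sub_distrib]
    refine Finset.sum_congr rfl fun i _ => Finset.sum_congr rfl fun j _ => by ring
  rw [hsplit]
  have hterm : ∀ i j : Fin 3,
      |((matrixPartialDeriv (fun y => Real.exp (2 * f y) • g y) x i i j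
            + matrixPartialDeriv g x i i j
            - 2 * matrixPartialDeriv (fun y => Real.exp (f y) • g y) x i i j)
          - (matrixPartialDeriv (fun y => Real.exp (2 * f y) • g y) x j i i
            + matrixPartialDeriv g x j i i
            - 2 * matrixPartialDeriv (fun y => Real.exp (f y) • g y) x j i i))
          * (x j / r)| ≤ 2 * B * r ^ (-2 * τ - 1) := by
    intro i j
    have h1 := comb_partial_bound τ C hτ hC g f hg hf hgdecay hdgdecay hfdecay hdfdecay
      x hx2 i i j
    have h2 := comb_partial_bound τ C hτ hC g f hg hf hgdecay hdgdecay hfdecay hdfdecay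
      x hx2 j i i
    rw [hxnorm] at h1 h2
    rw [abs_mul]
    have h3 : |(matrixPartialDeriv (fun y => Real.exp (2 * f y) • g y) x i i j
            + matrixPartialDeriv g x i i j
            - 2 * matrixPartialDeriv (fun y => Real.exp (f y) • g y) x i i j)
          - (matrixPartialDeriv (fun y => Real.exp (2 * f y) • g y) x j i i
            + matrixPartialDeriv g x j i i
            - 2 * matrixPartialDeriv (fun y => Real.exp (f y) • g y) x j i i)|
        ≤ 2 * B * r ^ (-2 * τ - 1) := by
      refine (abs_sub _ _).trans ?_
      calc _ ≤ B * r ^ (-2 * τ - 1) + B * r ^ (-2 * τ - 1) := add_le_add h1 h2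
        _ = 2 * B * r ^ (-2 * τ - 1) := by ring
    calc _ ≤ (2 * B * r ^ (-2 * τ - 1)) * 1 :=
          mul_le_mul h3 (hxj j) (abs_nonneg _) (by positivity)
      _ = 2 * B * r ^ (-2 * τ - 1) := mul_one _
  calc |∑ i : Fin 3, ∑ j : Fin 3, _| ≤ ∑ i : Fin 3, ∑ j : Fin 3, 2 * B * r ^ (-2 * τ - 1) := by
        refine (Finset.abs_sum_le_sum_abs _ _).trans (Finset.sum_le_sum fun i _ => ?_)
        refine (Finset.abs_sum_le_sum_abs _ _).trans (Finset.sum_le_sum fun j _ => ?_)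
        exact hterm i j
    _ = 18 * B * r ^ (-2 * τ - 1) := by
        simp [Finset.sum_const]
        ring

/-- The flux-limit form of the relation `m_g + m_{g'} = 2 m_{ḡ}` for the
conformal family `g`, `ḡ = e^f g`, `g' = e^{2f} g`, used in the proof of
Theorem 2.1 of the paper: the combined ADM flux integral of
`g' + g - 2ḡ` over large coordinate spheres tends to `0`.  Surface integrals
are taken with respect to the two-dimensional Hausdorff measure. -/
theorem conformal_mass_sum_flux_limit
    (τ C : ℝ) (hτ : 1 / 2 < τ) (hC : 0 < C)
    (g : EuclideanSpace ℝ (Fin 3) → Matrix (Fin 3) (Fin 3) ℝ)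
    (f : EuclideanSpace ℝ (Fin 3) → ℝ)
    (hg : ContDiffOn ℝ 1 g exteriorRegion)
    (hf : ContDiffOn ℝ 1 f exteriorRegion)
    (hgsymm : ∀ x ∈ exteriorRegion, (g x).IsSymm)
    (hgdecay : ∀ x ∈ exteriorRegion, ‖g x - 1‖ ≤ C * ‖x‖ ^ (-τ))
    (hdgdecay : ∀ x ∈ exteriorRegion, ∀ k : Fin 3,
      ‖fderivWithin ℝ g exteriorRegion x (EuclideanSpace.single k 1)‖ ≤ C * ‖x‖ ^ (-τ - 1))
    (hfdecay : ∀ x ∈ exteriorRegion, |f x| ≤ C * ‖x‖ ^ (-τ))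
    (hdfdecay : ∀ x ∈ exteriorRegion,
      ‖fderivWithin ℝ f exteriorRegion x‖ ≤ C * ‖x‖ ^ (-τ - 1)) :
    Tendsto (fun r : ℝ =>
        ∫ x in Metric.sphere (0 : EuclideanSpace ℝ (Fin 3)) r,
          (admIntegrand (fun y => Real.exp (2 * f y) • g y) r x
            + admIntegrand g r x
            - 2 * admIntegrand (fun y => Real.exp (f y) • g y) r x) ∂μH[2])
      atTop (nhds 0) := by
  set B := C ^ 3 * Real.exp C ^ 2 + 2 * (C + 1) * C ^ 2 * Real.exp C ^ 2 with hBdef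
  have hBpos : 0 < B := by positivity
  set K := 18 * B * (32 * Real.pi ^ 2) with hKdef
  have hbound : ∀ r : ℝ, 2 ≤ r →
      ‖∫ x in Metric.sphere (0 : EuclideanSpace ℝ (Fin 3)) r,
          (admIntegrand (fun y => Real.exp (2 * f y) • g y) r x
            + admIntegrand g r x
            - 2 * admIntegrand (fun y => Real.exp (f y) • g y) r x) ∂μH[2]‖
        ≤ K * r ^ (1 - 2 * τ) := by
    intro r hr
    have hrpos : (0:ℝ) < r := by linarith
    have hμ := sphere_hm_le r hrpos
    have hfin : μH[2] (Metric.sphere (0 : EuclideanSpace ℝ (Fin 3)) r) < ⊤ :=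
      lt_of_le_of_lt hμ ENNReal.ofReal_lt_top
    have hmeas : MeasurableSet (Metric.sphere (0 : EuclideanSpace ℝ (Fin 3)) r) :=
      Metric.isClosed_sphere.measurableSet
    have hptwise : ∀ᵐ x ∂(μH[2] : Measure (EuclideanSpace ℝ (Fin 3))),
        x ∈ Metric.sphere (0 : EuclideanSpace ℝ (Fin 3)) r →
        ‖admIntegrand (fun y => Real.exp (2 * f y) • g y) r x
            + admIntegrand g r x
            - 2 * admIntegrand (fun y => Real.exp (f y) • g y) r x‖
          ≤ 18 * B * r ^ (-2 * τ - 1) :=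
      Filter.Eventually.of_forall (fun x hx => by
        simpa [Real.norm_eq_abs, hBdef] using
          integrand_bound τ C hτ hC g f hg hf hgdecay hdgdecay hfdecay hdfdecay r hr x hx)
    have h1 := MeasureTheory.norm_setIntegral_le_of_norm_le_const_ae' hfin hptwise
    refine h1.trans ?_
    have h2 : (μH[2] (Metric.sphere (0 : EuclideanSpace ℝ (Fin 3)) r)).toReal
        ≤ 32 * Real.pi ^ 2 * r ^ 2 := ENNReal.toReal_le_of_le_ofReal (by positivity) hμ
    have hrp : (0:ℝ) ≤ 18 * B * r ^ (-2 * τ - 1) := by positivity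
    calc 18 * B * r ^ (-2 * τ - 1)
          * (μH[2] (Metric.sphere (0 : EuclideanSpace ℝ (Fin 3)) r)).toReal
        ≤ 18 * B * r ^ (-2 * τ - 1) * (32 * Real.pi ^ 2 * r ^ 2) :=
          mul_le_mul_of_nonneg_left h2 hrp
      _ = K * (r ^ (-2 * τ - 1) * r ^ (2:ℕ)) := by push_cast; ring
      _ = K * r ^ (1 - 2 * τ) := by
          rw [← Real.rpow_natCast r 2, ← Real.rpow_add hrpos]
          congr 1
          push_cast
          ring
  have hg0 : Tendsto (fun r : ℝ => K * r ^ (1 - 2 * τ)) atTop (nhds 0) := by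
    have h := tendsto_rpow_neg_atTop (y := 2 * τ - 1) (by linarith)
    have heq : (fun r : ℝ => r ^ (1 - 2 * τ)) = fun r : ℝ => r ^ (-(2 * τ - 1)) := by
      funext r; congr 1; ring
    have h2 : Tendsto (fun r : ℝ => r ^ (1 - 2 * τ)) atTop (nhds 0) := by rw [heq]; exact h
    simpa using h2.const_mul K
  exact squeeze_zero_norm' (Filter.eventually_atTop.mpr ⟨2, hbound⟩) hg0
end
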